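/- For any two density operators ρ_A, ρ_B on ℂ^d, the maximum over all couplings ρ_{AB} of Tr(P_s ρ_{AB}) is at most (1 + F(ρ_A, ρ_B))/2. -/

import Mathlib

open scoped Matrix Kronecker ComplexOrder

noncomputable section

namespace QEMD

variable {m n : Type*} [Fintype m] [Fintype n] [DecidableEq m] [DecidableEq n]

/-- Total square root: the PSD square root if `A` is PSD, else `0`. -/
def msqrt (A : Matrix n n ℂ) : Matrix n n ℂ :=
  letI := Classical.dec A.PosSemidef
  if h : A.PosSemidef then
    (h.1.eigenvectorUnitary : Matrix n n ℂ) *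
      Matrix.diagonal (fun i => ((Real.sqrt (h.1.eigenvalues i) : ℝ) : ℂ)) *
      star (h.1.eigenvectorUnitary : Matrix n n ℂ)
  else 0

/-- Trace norm `‖A‖₁ = Tr √(AᴴA)`. -/
def traceNorm (A : Matrix n n ℂ) : ℝ :=
  ((msqrt (Aᴴ * A)).trace).re

/-- Trace distance `D(ρ,σ) = ½‖ρ-σ‖₁`. -/
def traceDist (ρ σ : Matrix n n ℂ) : ℝ := traceNorm (ρ - σ) / 2

/-- Fidelity `F(ρ,σ) = Tr √(√ρ σ √ρ)`. -/
def fidelity (ρ σ : Matrix n n ℂ) : ℝ :=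
  ((msqrt (msqrt ρ * σ * msqrt ρ)).trace).re

/-- Density matrix predicate. -/
def IsDensity (ρ : Matrix n n ℂ) : Prop := ρ.PosSemidef ∧ ρ.trace = 1

/-- Projector `|v⟩⟨v|` onto a vector. -/
def proj (v : n → ℂ) : Matrix n n ℂ := Matrix.of fun i j => v i * star (v j)

/-- Partial trace over the first (left) factor. -/
def traceLeft (ρ : Matrix (m × n) (m × n) ℂ) : Matrix n n ℂ :=
  Matrix.of fun i j => ∑ k, ρ (k, i) (k, j)

/-- Partial trace over the second (right) factor. -/
def traceRight (ρ : Matrix (m × n) (m × n) ℂ) : Matrix m m ℂ :=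
  Matrix.of fun i j => ∑ k, ρ (i, k) (j, k)

/-- The swap operator `S|αβ⟩ = |βα⟩` on `ℂ^d ⊗ ℂ^d`. -/
def swap (d : ℕ) : Matrix (Fin d × Fin d) (Fin d × Fin d) ℂ :=
  Matrix.of fun p q => if p.1 = q.2 ∧ p.2 = q.1 then 1 else 0

/-- Projection onto the symmetric subspace, `P_s = (I + S)/2`. -/
def Psym (d : ℕ) : Matrix (Fin d × Fin d) (Fin d × Fin d) ℂ := (2:ℂ)⁻¹ • (1 + swap d)

/-- Projection onto the antisymmetric subspace, `P_as = (I - S)/2`. -/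
def Pasym (d : ℕ) : Matrix (Fin d × Fin d) (Fin d × Fin d) ℂ := (2:ℂ)⁻¹ • (1 - swap d)

/-- `ρAB` is a quantum coupling of `ρA` and `ρB`. -/
def IsCoupling (ρAB : Matrix (m × n) (m × n) ℂ) (ρA : Matrix m m ℂ)
    (ρB : Matrix n n ℂ) : Prop :=
  IsDensity ρAB ∧ traceRight ρAB = ρA ∧ traceLeft ρAB = ρB

/-- The maximally entangled vector `|Φ⟩ = (1/√d) ∑ᵢ |i⟩|i⟩`. -/
def maxEnt (d : ℕ) : Fin d × Fin d → ℂ :=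
  fun p => if p.1 = p.2 then ((1 / Real.sqrt d : ℝ) : ℂ) else 0


set_option linter.unusedSectionVars false
set_option maxHeartbeats 1000000

/-! ### Auxiliary positivity lemmas -/

lemma trace_self_mul_conjTranspose_re_nonneg (M : Matrix m n ℂ) :
    0 ≤ ((M * Mᴴ).trace).re := by
  have h : (M * Mᴴ).trace = ∑ i, ∑ j, M i j * star (M i j) := by
    simp [Matrix.trace, Matrix.mul_apply, Matrix.diag, Matrix.conjTranspose_apply]
  rw [h]
  simp only [Complex.re_sum]
  refine Finset.sum_nonneg fun i _ => Finset.sum_nonneg fun j _ => ?_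
  simp only [Complex.star_def, Complex.mul_conj, Complex.ofReal_re]
  exact Complex.normSq_nonneg _

lemma trace_psd_mul_re_nonneg {P Q : Matrix n n ℂ} (hP : P.PosSemidef)
    (hQ : Q.PosSemidef) : 0 ≤ ((P * Q).trace).re := by
  obtain ⟨p, rfl⟩ : ∃ p : Matrix n n ℂ, P = pᴴ * p := by
    open scoped MatrixOrder in
    exact CStarAlgebra.nonneg_iff_eq_star_mul_self.mp hP.nonneg
  obtain ⟨q, rfl⟩ : ∃ q : Matrix n n ℂ, Q = qᴴ * q := by
    open scoped MatrixOrder in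
    exact CStarAlgebra.nonneg_iff_eq_star_mul_self.mp hQ.nonneg
  have h1 : pᴴ * p * (qᴴ * q) = pᴴ * (p * qᴴ * q) := by
    simp only [Matrix.mul_assoc]
  have h2 : (pᴴ * (p * qᴴ * q)).trace = ((p * qᴴ) * (p * qᴴ)ᴴ).trace := by
    rw [Matrix.trace_mul_comm]
    congr 1
    simp only [Matrix.conjTranspose_mul, Matrix.conjTranspose_conjTranspose, Matrix.mul_assoc]
  rw [h1, h2]
  exact trace_self_mul_conjTranspose_re_nonneg _

lemma trace_psd_re_nonneg {P : Matrix n n ℂ} (hP : P.PosSemidef) : 0 ≤ (P.trace).re := by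
  have := trace_psd_mul_re_nonneg hP (Matrix.PosSemidef.one (n := n) (R := ℂ))
  simpa using this

lemma trace_mono {A B Q : Matrix n n ℂ} (hAB : (B - A).PosSemidef) (hQ : Q.PosSemidef) :
    ((A * Q).trace).re ≤ ((B * Q).trace).re := by
  have := trace_psd_mul_re_nonneg hAB hQ
  rw [Matrix.sub_mul, Matrix.trace_sub, Complex.sub_re] at this
  linarith

lemma smul_posSemidef {r : ℝ} (hr : 0 ≤ r) {A : Matrix n n ℂ} (hA : A.PosSemidef) :
    ((r : ℂ) • A).PosSemidef := by
  exact hA.smul (Complex.zero_le_real.mpr hr)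

lemma smul_posDef {r : ℝ} (hr : 0 < r) {A : Matrix n n ℂ} (hA : A.PosDef) :
    ((r : ℂ) • A).PosDef := by
  exact hA.smul (Complex.zero_lt_real.mpr hr)

/-! ### Properties of `msqrt` -/

lemma msqrt_posSemidef {A : Matrix n n ℂ} (hA : A.PosSemidef) : (msqrt A).PosSemidef := by
  unfold msqrt
  rw [dif_pos hA]
  have hD : (Matrix.diagonal (fun i => ((Real.sqrt (hA.1.eigenvalues i) : ℝ) : ℂ))).PosSemidef :=
    Matrix.PosSemidef.diagonal fun i => Complex.zero_le_real.mpr (Real.sqrt_nonneg _)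
  exact hD.mul_mul_conjTranspose_same _

lemma msqrt_mul_self {A : Matrix n n ℂ} (hA : A.PosSemidef) : msqrt A * msqrt A = A := by
  unfold msqrt
  rw [dif_pos hA]
  set U := (hA.1.eigenvectorUnitary : Matrix n n ℂ) with hUdef
  set D := Matrix.diagonal (fun i => ((Real.sqrt (hA.1.eigenvalues i) : ℝ) : ℂ)) with hDdef
  have hUU : star U * U = 1 := Unitary.star_mul_self_of_mem hA.1.eigenvectorUnitary.2
  have hDD : D * D = Matrix.diagonal (RCLike.ofReal ∘ hA.1.eigenvalues) := by
    rw [hDdef, Matrix.diagonal_mul_diagonal]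
    congr 1
    funext i
    rw [← Complex.ofReal_mul, Real.mul_self_sqrt (hA.eigenvalues_nonneg i)]
    rfl
  calc U * D * star U * (U * D * star U) = U * (D * D) * star U := by
        simp only [Matrix.mul_assoc]
        rw [← Matrix.mul_assoc (star U) U, hUU, Matrix.one_mul]
    _ = A := by
        rw [hDD]
        conv_rhs => rw [hA.1.spectral_theorem]
        simp [Unitary.conjStarAlgAut_apply, hUdef]

lemma trace_fromBlocks' (A : Matrix m m ℂ) (B : Matrix m n ℂ) (C : Matrix n m ℂ)
    (D : Matrix n n ℂ) : (Matrix.fromBlocks A B C D).trace = A.trace + D.trace := by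
  simp [Matrix.trace, Fintype.sum_sum_type, Matrix.fromBlocks, Matrix.diag]

/-! ### The SDP master inequality -/

lemma master {ρ₁ ρ₂ C X : Matrix n n ℂ}
    (hP : (Matrix.fromBlocks ρ₁ C Cᴴ ρ₂).PosSemidef) (hX : X.PosDef) :
    2 * (C.trace).re ≤ ((ρ₁ * X).trace).re + ((ρ₂ * X⁻¹).trace).re := by
  set S := msqrt X with hSdef
  have hS : S.PosSemidef := msqrt_posSemidef hX.posSemidef
  have hSS : S * S = X := msqrt_mul_self hX.posSemidef
  have hSdetne : IsUnit S.det := by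
    refine isUnit_iff_ne_zero.mpr fun h => hX.det_pos.ne' ?_
    rw [← hSS, Matrix.det_mul, h, mul_zero]
  have hST : S * S⁻¹ = 1 := Matrix.mul_nonsing_inv _ hSdetne
  have hTS : S⁻¹ * S = 1 := Matrix.nonsing_inv_mul _ hSdetne
  have hXinv : X⁻¹ = S⁻¹ * S⁻¹ := by rw [← hSS, Matrix.mul_inv_rev]
  have hSH : Sᴴ = S := hS.isHermitian
  have hTH : (S⁻¹)ᴴ = S⁻¹ := by rw [Matrix.conjTranspose_nonsing_inv, hSH]
  set Z := Matrix.fromCols S (-(S⁻¹)) with hZdef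
  have hQ : Zᴴ * Z = Matrix.fromBlocks X (-1) (-1) X⁻¹ := by
    rw [hZdef, Matrix.conjTranspose_fromCols_eq_fromRows_conjTranspose,
      Matrix.fromRows_mul_fromCols]
    rw [Matrix.conjTranspose_neg, hSH, hTH]
    simp only [Matrix.mul_neg, Matrix.neg_mul, neg_neg, hSS, hST, hTS, hXinv]
  have hQpsd : (Matrix.fromBlocks X (-1) (-1) X⁻¹ :
      Matrix (n ⊕ n) (n ⊕ n) ℂ).PosSemidef := by
    rw [← hQ]; exact Matrix.posSemidef_conjTranspose_mul_self Z
  have h0 := trace_psd_mul_re_nonneg hP hQpsd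
  rw [Matrix.fromBlocks_multiply, trace_fromBlocks'] at h0
  have hCH : ((Cᴴ).trace).re = (C.trace).re := by
    rw [Matrix.trace_conjTranspose]
    exact Complex.conj_re _
  simp only [Matrix.mul_neg, Matrix.mul_one, Matrix.trace_add, Matrix.trace_neg,
    Complex.add_re, Complex.neg_re] at h0
  rw [hCH] at h0
  linarith

lemma posDef_conj {K : Matrix n n ℂ} (hK : K.PosDef) (B : Matrix n n ℂ)
    (hB : IsUnit B) : (Bᴴ * K * B).PosDef := by
  exact hK.conjTranspose_mul_mul_same (Matrix.mulVec_injective_iff_isUnit.mpr hB)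

/-- The main estimate, for fixed regularization parameters `a`, `b`. -/
lemma key_est {ρ σ C : Matrix n n ℂ} (hρ : ρ.PosSemidef) (hσ : σ.PosSemidef)
    (hσt : (σ.trace).re ≤ 1)
    (hP : (Matrix.fromBlocks ρ C Cᴴ σ).PosSemidef)
    {a b : ℝ} (ha : 0 < a) (hb : 0 < b) :
    (C.trace).re ≤ ((msqrt (msqrt ρ * σ * msqrt ρ)).trace).re +
      (b * (Fintype.card n : ℝ) + Real.sqrt a * ((msqrt (msqrt ρ * σ * msqrt ρ)).trace).re
        + (a * Real.sqrt a + a * a) / b) / 2 := by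
  set s := msqrt ρ with hsdef
  have hs : s.PosSemidef := msqrt_posSemidef hρ
  have hss : s * s = ρ := msqrt_mul_self hρ
  have hsσs : (s * σ * s).PosSemidef := by
    have := hσ.mul_mul_conjTranspose_same s
    rwa [hs.isHermitian.eq] at this
  set G := msqrt (s * σ * s) with hGdef
  have hG : G.PosSemidef := msqrt_posSemidef hsσs
  have hGG : G * G = s * σ * s := msqrt_mul_self hsσs
  set F := (G.trace).re with hFdef
  have hF0 : 0 ≤ F := trace_psd_re_nonneg hG
  -- the matrices R, K, X
  set R := s + (a : ℂ) • 1 with hRdef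
  have hR_pd : R.PosDef := Matrix.PosDef.posSemidef_add hs (smul_posDef ha Matrix.PosDef.one)
  have hR_H : Rᴴ = R := hR_pd.isHermitian.eq
  set K := G + (b : ℂ) • 1 with hKdef
  have hK_pd : K.PosDef := Matrix.PosDef.posSemidef_add hG (smul_posDef hb Matrix.PosDef.one)
  have hK_H : Kᴴ = K := hK_pd.isHermitian.eq
  have hKinv_pd : K⁻¹.PosDef := hK_pd.inv
  have hKinv_H : (K⁻¹)ᴴ = K⁻¹ := hKinv_pd.isHermitian.eq
  have hRdet : IsUnit R.det := (Matrix.isUnit_iff_isUnit_det R).mp hR_pd.isUnit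
  have hKdet : IsUnit K.det := (Matrix.isUnit_iff_isUnit_det K).mp hK_pd.isUnit
  have hRRinv : R * R⁻¹ = 1 := Matrix.mul_nonsing_inv _ hRdet
  have hRinvR : R⁻¹ * R = 1 := Matrix.nonsing_inv_mul _ hRdet
  have hKKinv : K * K⁻¹ = 1 := Matrix.mul_nonsing_inv _ hKdet
  have hKinvK : K⁻¹ * K = 1 := Matrix.nonsing_inv_mul _ hKdet
  have hRinv_H : (R⁻¹)ᴴ = R⁻¹ := hR_pd.inv.isHermitian.eq
  set X := R⁻¹ * K * R⁻¹ with hXdef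
  have hX_pd : X.PosDef := by
    have := posDef_conj hK_pd R⁻¹ (Matrix.isUnit_nonsing_inv_iff.mpr hR_pd.isUnit)
    rwa [hRinv_H] at this
  have hXinv : X⁻¹ = R * K⁻¹ * R := by
    apply Matrix.inv_eq_right_inv
    calc R⁻¹ * K * R⁻¹ * (R * K⁻¹ * R)
        = R⁻¹ * K * ((R⁻¹ * R) * K⁻¹) * R := by simp only [Matrix.mul_assoc]
      _ = R⁻¹ * (K * K⁻¹) * R := by rw [hRinvR]; simp only [Matrix.one_mul, Matrix.mul_assoc]
      _ = 1 := by rw [hKKinv, Matrix.mul_one, hRinvR]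
  have hmaster := master hP hX_pd
  set t := Real.sqrt a with htdef
  have ht0 : 0 ≤ t := Real.sqrt_nonneg a
  have htt : (t:ℂ) * (t:ℂ) = (a:ℂ) := by
    rw [← Complex.ofReal_mul, Real.mul_self_sqrt ha.le]
  -- Step A : Tr(ρ X) ≤ F + b d
  have hRR : R * R = ρ + ((a:ℂ) • s + (a:ℂ) • s + ((a:ℂ)*(a:ℂ)) • (1 : Matrix n n ℂ)) := by
    rw [hRdef]
    simp only [Matrix.add_mul, Matrix.mul_add, Matrix.mul_smul, Matrix.smul_mul,
      Matrix.mul_one, Matrix.one_mul, smul_smul, smul_add, hss]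
    abel
  have hE : (R * R - ρ).PosSemidef := by
    rw [hRR, add_sub_cancel_left]
    have haa : ((a:ℂ)*(a:ℂ)) • (1 : Matrix n n ℂ) = ((a*a : ℝ):ℂ) • 1 := by push_cast; rfl
    rw [haa]
    exact ((smul_posSemidef ha.le hs).add (smul_posSemidef ha.le hs)).add
      (smul_posSemidef (mul_nonneg ha.le ha.le) (Matrix.PosDef.one).posSemidef)
  have cA : ((ρ * X).trace).re ≤ F + b * (Fintype.card n : ℝ) := by
    have h1 : ((ρ * X).trace).re ≤ ((R * R * X).trace).re := trace_mono hE hX_pd.posSemidef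
    have h2 : (R * R * X).trace = K.trace := by
      rw [hXdef]
      have e1 : R * R * (R⁻¹ * K * R⁻¹) = R * (K * R⁻¹) := by
        calc R * R * (R⁻¹ * K * R⁻¹) = R * ((R * R⁻¹) * (K * R⁻¹)) := by
              simp only [Matrix.mul_assoc]
          _ = R * (K * R⁻¹) := by rw [hRRinv, Matrix.one_mul]
      rw [e1, Matrix.trace_mul_comm, Matrix.mul_assoc, hRinvR, Matrix.mul_one]
    have h3 : (K.trace).re = F + b * (Fintype.card n : ℝ) := by
      rw [hKdef, Matrix.trace_add, Matrix.trace_smul, Matrix.trace_one]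
      simp [Complex.add_re, hFdef]
    rw [h2, h3] at h1
    exact h1
  -- Step B : Tr(σ X⁻¹) ≤ F + t F + (a t + a a)/b
  have hM_H : (s - (t:ℂ) • 1)ᴴ = (s - (t:ℂ) • 1) := by
    rw [Matrix.conjTranspose_sub, hs.isHermitian.eq, Matrix.conjTranspose_smul,
      Matrix.conjTranspose_one]
    congr 1
    simp [Complex.star_def, Complex.conj_ofReal]
  have hDpsd : ((t:ℂ) • ((s - (t:ℂ)•1) * σ * (s - (t:ℂ)•1))).PosSemidef := by
    refine smul_posSemidef ht0 ?_
    have := hσ.mul_mul_conjTranspose_same (s - (t:ℂ)•1)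
    rwa [hM_H] at this
  have hid : G*G + (t:ℂ)•(G*G) + ((a*t + a*a : ℝ):ℂ)•σ - R*σ*R
      = (t:ℂ) • ((s - (t:ℂ)•1) * σ * (s - (t:ℂ)•1)) := by
    rw [hGG, hRdef]
    push_cast
    simp only [Matrix.add_mul, Matrix.mul_add, Matrix.sub_mul, Matrix.mul_sub,
      Matrix.mul_smul, Matrix.smul_mul, Matrix.one_mul, Matrix.mul_one, smul_smul,
      smul_sub, smul_add, htt, add_smul]
    module
  have hcomp : (((R*σ*R) * K⁻¹).trace).re ≤
      (((G*G + (t:ℂ)•(G*G) + ((a*t + a*a : ℝ):ℂ)•σ) * K⁻¹).trace).re :=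
    trace_mono (hid ▸ hDpsd) hKinv_pd.posSemidef
  have hGGK : ((G*G*K⁻¹).trace).re ≤ F := by
    have hGKG : G * K⁻¹ * G + (b:ℂ) • (G * K⁻¹) = G := by
      calc G * K⁻¹ * G + (b:ℂ)•(G*K⁻¹)
          = G * K⁻¹ * (G + (b:ℂ)•1) := by
            rw [Matrix.mul_add, Matrix.mul_smul, Matrix.mul_one]
        _ = G := by rw [← hKdef, Matrix.mul_assoc, hKinvK, Matrix.mul_one]
    have h4 : (G*G*K⁻¹).trace = (G*K⁻¹*G).trace := by
      rw [Matrix.mul_assoc, Matrix.trace_mul_comm, Matrix.mul_assoc]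
    have h5 : 0 ≤ ((G*K⁻¹).trace).re := trace_psd_mul_re_nonneg hG hKinv_pd.posSemidef
    have h6 := congrArg (fun M : Matrix n n ℂ => (Matrix.trace M).re) hGKG
    simp only [Matrix.trace_add, Matrix.trace_smul, Complex.add_re, smul_eq_mul,
      Complex.mul_re, Complex.ofReal_re, Complex.ofReal_im, zero_mul, sub_zero] at h6
    rw [h4]
    rw [← hFdef] at h6
    nlinarith [hb.le]
  have hKinvG_psd : (K⁻¹ * G).PosSemidef := by
    have hid2 : K⁻¹ * G = (G*K⁻¹)ᴴ * (G*K⁻¹) + (b:ℂ) • (K⁻¹ * G * K⁻¹) := by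
      have e2 : (G*K⁻¹)ᴴ = K⁻¹ * G := by
        rw [Matrix.conjTranspose_mul, hKinv_H, hG.isHermitian.eq]
      rw [e2]
      calc K⁻¹ * G = K⁻¹ * G * (K * K⁻¹) := by rw [hKKinv, Matrix.mul_one]
        _ = K⁻¹ * G * ((G + (b:ℂ)•1) * K⁻¹) := by rw [← hKdef]
        _ = K⁻¹ * G * (G * K⁻¹) + (b:ℂ) • (K⁻¹ * G * K⁻¹) := by
            rw [Matrix.add_mul, Matrix.mul_add, Matrix.smul_mul, Matrix.one_mul,
              Matrix.mul_smul]
        _ = _ := by simp only [Matrix.mul_assoc]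
    rw [hid2]
    refine (Matrix.posSemidef_conjTranspose_mul_self _).add (smul_posSemidef hb.le ?_)
    have := hG.mul_mul_conjTranspose_same K⁻¹
    rwa [hKinv_H] at this
  have hone : (((1/b : ℝ):ℂ) • (1:Matrix n n ℂ) - K⁻¹).PosSemidef := by
    have e3 : ((1/b:ℝ):ℂ) • (1:Matrix n n ℂ) - K⁻¹ = ((1/b:ℝ):ℂ) • (K⁻¹ * G) := by
      have e4 : K⁻¹ * G + (b:ℂ) • K⁻¹ = 1 := by
        calc K⁻¹ * G + (b:ℂ) • K⁻¹ = K⁻¹ * (G + (b:ℂ)•1) := by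
              rw [Matrix.mul_add, Matrix.mul_smul, Matrix.mul_one]
          _ = 1 := by rw [← hKdef, hKinvK]
      have hbne : (b:ℂ) ≠ 0 := by exact_mod_cast hb.ne'
      rw [← e4]
      push_cast
      rw [smul_add, smul_smul]
      field_simp
      rw [one_smul, add_sub_cancel_right]
    rw [e3]
    exact smul_posSemidef (by positivity) hKinvG_psd
  have hσK : ((σ * K⁻¹).trace).re ≤ 1/b := by
    have h7 := trace_mono hone hσ
    have h8 : ((((1/b:ℝ):ℂ) • (1:Matrix n n ℂ)) * σ).trace.re = (1/b) * (σ.trace).re := by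
      rw [Matrix.smul_mul, Matrix.one_mul, Matrix.trace_smul]
      simp
    rw [Matrix.trace_mul_comm]
    rw [h8] at h7
    have : (1/b) * (σ.trace).re ≤ 1/b := by
      have hbinv : (0:ℝ) ≤ 1/b := by positivity
      nlinarith
    linarith
  have cB : ((σ * X⁻¹).trace).re ≤ F + t * F + (a * t + a * a)/b := by
    have hcyc : (σ * X⁻¹).trace = ((R * σ * R) * K⁻¹).trace := by
      rw [hXinv]
      calc (σ * (R * K⁻¹ * R)).trace = ((σ * (R * K⁻¹)) * R).trace := by
            simp only [Matrix.mul_assoc]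
        _ = (R * (σ * (R * K⁻¹))).trace := (Matrix.trace_mul_comm _ _)
        _ = ((R * σ * R) * K⁻¹).trace := by simp only [Matrix.mul_assoc]
    have hexp : ((G*G + (t:ℂ)•(G*G) + ((a*t + a*a : ℝ):ℂ)•σ) * K⁻¹).trace.re
        = ((G*G*K⁻¹).trace).re + t * ((G*G*K⁻¹).trace).re
          + (a*t + a*a) * ((σ * K⁻¹).trace).re := by
      rw [Matrix.add_mul, Matrix.add_mul, Matrix.smul_mul, Matrix.smul_mul,
        Matrix.trace_add, Matrix.trace_add, Matrix.trace_smul, Matrix.trace_smul]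
      simp [Complex.add_re]
    have h9 : 0 ≤ ((σ * K⁻¹).trace).re := trace_psd_mul_re_nonneg hσ hKinv_pd.posSemidef
    have h10 : 0 ≤ a*t + a*a := by positivity
    rw [hcyc]
    calc (((R*σ*R) * K⁻¹).trace).re
        ≤ ((G*G*K⁻¹).trace).re + t * ((G*G*K⁻¹).trace).re
          + (a*t + a*a) * ((σ * K⁻¹).trace).re := by rw [← hexp]; exact hcomp
      _ ≤ F + t * F + (a * t + a * a)/b := by
          have b1 : t * ((G*G*K⁻¹).trace).re ≤ t * F :=
            mul_le_mul_of_nonneg_left hGGK ht0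
          have b2 : (a*t + a*a) * ((σ * K⁻¹).trace).re ≤ (a*t + a*a) * (1/b) :=
            mul_le_mul_of_nonneg_left hσK h10
          have : (a*t + a*a) * (1/b) = (a*t + a*a)/b := by ring
          linarith [hGGK]
  linarith

lemma key {ρ σ C : Matrix n n ℂ} (hρ : ρ.PosSemidef) (hσ : σ.PosSemidef)
    (hσt : (σ.trace).re ≤ 1)
    (hP : (Matrix.fromBlocks ρ C Cᴴ σ).PosSemidef) :
    (C.trace).re ≤ ((msqrt (msqrt ρ * σ * msqrt ρ)).trace).re := by
  set F := ((msqrt (msqrt ρ * σ * msqrt ρ)).trace).re with hFdef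
  have hsσs : (msqrt ρ * σ * msqrt ρ).PosSemidef := by
    have := hσ.mul_mul_conjTranspose_same (msqrt ρ)
    rwa [(msqrt_posSemidef hρ).isHermitian.eq] at this
  have hF0 : 0 ≤ F := trace_psd_re_nonneg (msqrt_posSemidef hsσs)
  refine le_of_forall_pos_le_add fun ε hε => ?_
  set d' := (Fintype.card n : ℝ) with hd'def
  have hd0 : 0 ≤ d' := Nat.cast_nonneg _
  set b := ε / (d' + 1) with hbdef
  have hb : 0 < b := by positivity
  set M := F + 2/b + 1 with hMdef
  have hM : 0 < M := by positivity
  set a := min 1 ((ε/M)^2) with hadef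
  have ha : 0 < a := lt_min one_pos (by positivity)
  have ha1 : a ≤ 1 := min_le_left _ _
  have hta : Real.sqrt a ≤ ε/M := by
    calc Real.sqrt a ≤ Real.sqrt ((ε/M)^2) := Real.sqrt_le_sqrt (min_le_right _ _)
      _ = ε/M := Real.sqrt_sq (by positivity)
  have ht1 : Real.sqrt a ≤ 1 := Real.sqrt_le_one.mpr ha1
  have ht0 : 0 ≤ Real.sqrt a := Real.sqrt_nonneg a
  have hasq : a ≤ Real.sqrt a := by
    nlinarith [Real.mul_self_sqrt ha.le]
  have hkey := key_est hρ hσ hσt hP ha hb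
  rw [← hFdef] at hkey
  have e1 : b * d' ≤ ε := by
    rw [hbdef]
    rw [div_mul_eq_mul_div, div_le_iff₀ (by positivity)]
    nlinarith
  have e2 : Real.sqrt a * F + (a * Real.sqrt a + a * a)/b ≤ ε := by
    have f1 : a * Real.sqrt a ≤ Real.sqrt a := by nlinarith
    have f2 : a * a ≤ Real.sqrt a := by nlinarith
    have f3 : (a * Real.sqrt a + a * a)/b ≤ (Real.sqrt a + Real.sqrt a)/b :=
      (div_le_div_iff_of_pos_right hb).mpr (by linarith)
    have f4 : Real.sqrt a * F + (Real.sqrt a + Real.sqrt a)/b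
        = Real.sqrt a * (F + 2/b) := by field_simp; ring
    have f5 : Real.sqrt a * (F + 2/b) ≤ (ε/M) * M := by
      apply mul_le_mul hta (by rw [hMdef]; linarith) (by positivity) (by positivity)
    have f6 : (ε/M) * M = ε := div_mul_cancel₀ _ hM.ne'
    linarith
  linarith

theorem stmt10 (d : ℕ) (ρA ρB : Matrix (Fin d) (Fin d) ℂ)
    (hA : IsDensity ρA) (hB : IsDensity ρB)
    (ρAB : Matrix ((Fin d) × (Fin d)) ((Fin d) × (Fin d)) ℂ)
    (hAB : IsCoupling ρAB ρA ρB) :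
    ((Psym d * ρAB).trace).re ≤ (1 + fidelity ρA ρB) / 2 := by
  classical
  obtain ⟨⟨hABpsd, hABtr⟩, hTrR, hTrL⟩ := hAB
  set T := msqrt ρAB with hTdef
  have hT : T.PosSemidef := msqrt_posSemidef hABpsd
  have hTT : T * T = ρAB := msqrt_mul_self hABpsd
  have hTH := hT.isHermitian
  have hρT : ∀ x y, ρAB x y = ∑ k, T x k * star (T y k) := by
    intro x y
    rw [← hTT, Matrix.mul_apply]
    refine Finset.sum_congr rfl fun k _ => ?_
    rw [hTH.apply k y]
  -- the rectangular factors
  set V : Matrix (Fin d) ((Fin d) × ((Fin d) × (Fin d))) ℂ :=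
    Matrix.of fun i q => T (i, q.1) q.2 with hVdef
  set W : Matrix ((Fin d) × ((Fin d) × (Fin d))) (Fin d) ℂ :=
    Matrix.of fun q i => star (T (q.1, i) q.2) with hWdef
  have hVV : V * Vᴴ = ρA := by
    rw [← hTrR]
    ext i i'
    rw [Matrix.mul_apply]
    simp only [Matrix.conjTranspose_apply, hVdef, Matrix.of_apply, traceRight,
      Fintype.sum_prod_type]
    refine Finset.sum_congr rfl fun j _ => ?_
    rw [hρT (i, j) (i', j), Fintype.sum_prod_type]
  have hWW : Wᴴ * W = ρB := by
    rw [← hTrL]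
    ext i i'
    rw [Matrix.mul_apply]
    simp only [Matrix.conjTranspose_apply, hWdef, Matrix.of_apply, traceLeft,
      Fintype.sum_prod_type, star_star]
    refine Finset.sum_congr rfl fun j _ => ?_
    rw [hρT (j, i) (j, i'), Fintype.sum_prod_type]
  have hblock : (Matrix.fromBlocks ρA (V * W) (V * W)ᴴ ρB).PosSemidef := by
    have hY := Matrix.posSemidef_conjTranspose_mul_self (Matrix.fromCols Vᴴ W)
    rw [Matrix.conjTranspose_fromCols_eq_fromRows_conjTranspose,
      Matrix.conjTranspose_conjTranspose, Matrix.fromRows_mul_fromCols] at hY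
    rw [Matrix.conjTranspose_mul]
    rwa [hVV, hWW] at hY
  -- trace identity with the swap operator
  have hswap : (swap d * ρAB).trace = ∑ p : Fin d × Fin d, ρAB (p.2, p.1) p := by
    unfold Matrix.trace swap
    simp only [Matrix.diag, Matrix.mul_apply, Matrix.of_apply, ite_mul, one_mul, zero_mul]
    refine Finset.sum_congr rfl fun p _ => ?_
    rw [Finset.sum_eq_single (p.2, p.1)]
    · simp
    · intro q _ hq
      rw [if_neg]
      rintro ⟨h1, h2⟩
      exact hq (Prod.ext h2.symm h1.symm)
    · intro h; exact absurd (Finset.mem_univ _) h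
  have hC : (V * W).trace = (swap d * ρAB).trace := by
    rw [hswap]
    calc (V * W).trace
        = ∑ i, ∑ q : (Fin d) × ((Fin d) × (Fin d)), T (i, q.1) q.2 * star (T (q.1, i) q.2) := by
          simp only [Matrix.trace, Matrix.diag, Matrix.mul_apply, hVdef, hWdef,
            Matrix.of_apply]
      _ = ∑ i, ∑ j, ∑ k : Fin d × Fin d, T (i, j) k * star (T (j, i) k) := by
          refine Finset.sum_congr rfl fun i _ => ?_
          rw [Fintype.sum_prod_type]
      _ = ∑ j, ∑ i, ∑ k : Fin d × Fin d, T (i, j) k * star (T (j, i) k) := Finset.sum_comm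
      _ = ∑ p : Fin d × Fin d, ρAB (p.2, p.1) p := by
          rw [Fintype.sum_prod_type]
          refine Finset.sum_congr rfl fun p1 _ => Finset.sum_congr rfl fun p2 _ => ?_
          rw [hρT (p2, p1) (p1, p2)]
  -- the key fidelity bound
  have hσt : (ρB.trace).re ≤ 1 := by rw [hB.2]; norm_num
  have hkey := key hA.1 hB.1 hσt hblock
  -- reduce the goal
  have hPsym : (Psym d * ρAB).trace = (2:ℂ)⁻¹ * (1 + (swap d * ρAB).trace) := by
    rw [Psym, Matrix.smul_mul, Matrix.trace_smul, Matrix.add_mul, Matrix.one_mul,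
      Matrix.trace_add, hABtr, smul_eq_mul]
  rw [hPsym]
  have h2 : ((2:ℂ)⁻¹ * (1 + (swap d * ρAB).trace)).re
      = (1 + ((swap d * ρAB).trace).re) / 2 := by
    have : ((2:ℂ)⁻¹ : ℂ) = ((2⁻¹ : ℝ) : ℂ) := by norm_num
    rw [this, Complex.re_ofReal_mul]
    simp [Complex.add_re]
    ring
  rw [h2]
  have hfid : fidelity ρA ρB = ((msqrt (msqrt ρA * ρB * msqrt ρA)).trace).re := rfl
  rw [hfid]
  rw [hC] at hkey
  linarith
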